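/- arXiv:2405.12938 — 2 statements merged into one kernel-verified Lean document; each statement's English description precedes it below -/
import Mathlib

section
/- If s, e, i, r solve the homogeneous SEIR ODE system with nonnegative parameters σ, φₑ, φᵢ, βₑ, βᵢ ≥ 0 and 0 ≤ 1 - A/(n̄+n₀), and the initial data satisfy s(0), e(0), i(0), r(0) ≥ 0, then s(t), e(t), i(t), r(t) remain nonnegative for all t ≥ 0. -/
open Real Filter Topology intervalIntegral

theorem derivA {f : ℝ → ℝ} {d τ : ℝ} (hf : HasDerivAt f d τ)
    (h : ∀ᶠ u in 𝓝[<] τ, f τ ≤ f u) : d ≤ 0 := by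
  have hle : 𝓝[<] τ ≤ 𝓝[≠] τ := nhdsWithin_mono τ fun x hx => ne_of_lt hx
  have hs := (hasDerivAt_iff_tendsto_slope.mp hf).mono_left hle
  refine le_of_tendsto hs ?_
  filter_upwards [h, self_mem_nhdsWithin] with u hu hu'
  have h1 : u - τ < 0 := sub_neg.mpr hu'
  have h2 : slope f τ u = (f u - f τ) / (u - τ) := by rw [slope_def_field]
  rw [h2]
  exact div_nonpos_of_nonneg_of_nonpos (by linarith) (by linarith)

set_option maxHeartbeats 1000000 in
theorem seir_ode_nonneg
    (s e i r : ℝ → ℝ) (A n₀ nbar βe βi σ φe φi : ℝ)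
    (hσ : 0 ≤ σ) (hφe : 0 ≤ φe) (hφi : 0 ≤ φi) (hβe : 0 ≤ βe) (hβi : 0 ≤ βi)
    (hc : 0 ≤ 1 - A / (nbar + n₀))
    (hs : ∀ t, HasDerivAt s (-((1 - A / (nbar + n₀)) * s t * (βe * e t + βi * i t))) t)
    (he : ∀ t, HasDerivAt e ((1 - A / (nbar + n₀)) * s t * (βe * e t + βi * i t) - (σ + φe) * e t) t)
    (hi : ∀ t, HasDerivAt i (σ * e t - φi * i t) t)
    (hr : ∀ t, HasDerivAt r (φi * i t + φe * e t) t)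
    (hs0 : 0 ≤ s 0) (he0 : 0 ≤ e 0) (hi0 : 0 ≤ i 0) (hr0 : 0 ≤ r 0) :
    ∀ t : ℝ, 0 ≤ t → 0 ≤ s t ∧ 0 ≤ e t ∧ 0 ≤ i t ∧ 0 ≤ r t := by
  set c : ℝ := 1 - A / (nbar + n₀) with hcdef
  have hecont : Continuous e := continuous_iff_continuousAt.mpr fun t => (he t).continuousAt
  have hicont : Continuous i := continuous_iff_continuousAt.mpr fun t => (hi t).continuousAt
  have hscont : Continuous s := continuous_iff_continuousAt.mpr fun t => (hs t).continuousAt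
  -- Step 1: s is nonnegative everywhere
  set k : ℝ → ℝ := fun t => c * (βe * e t + βi * i t) with hkdef
  have hkcont : Continuous k := by
    apply Continuous.mul continuous_const
    exact ((continuous_const.mul hecont).add (continuous_const.mul hicont))
  set K : ℝ → ℝ := fun t => ∫ x in (0:ℝ)..t, k x with hKdef
  have hK : ∀ t, HasDerivAt K (k t) t := fun t =>
    intervalIntegral.integral_hasDerivAt_right (hkcont.intervalIntegrable 0 t)
      (hkcont.stronglyMeasurableAtFilter _ _) hkcont.continuousAt
  have hg : ∀ t, HasDerivAt (fun u => s u * Real.exp (K u)) 0 t := by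
    intro t
    have := (hs t).mul ((hK t).exp)
    rw [show (fun u => s u * Real.exp (K u)) = s * fun x => Real.exp (K x) from rfl]
    convert this using 1
    · rfl
    · rfl
    simp only [hkdef]
    ring
  have hgconst : ∀ t, s t * Real.exp (K t) = s 0 * Real.exp (K 0) := by
    intro t
    exact is_const_of_deriv_eq_zero (fun x => (hg x).differentiableAt)
      (fun x => (hg x).deriv) t 0
  have hsnn : ∀ t, 0 ≤ s t := by
    intro t
    have h1 := hgconst t
    have h2 : K 0 = 0 := intervalIntegral.integral_same
    rw [h2, Real.exp_zero, mul_one] at h1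
    have h3 := Real.exp_pos (K t)
    nlinarith
  -- Step 2: fix T, bound coefficients
  intro T hT
  obtain ⟨C, hCb⟩ := (isCompact_Icc (a := (0:ℝ)) (b := T)).exists_bound_of_continuousOn
    ((continuous_const.mul hscont).continuousOn)
  have hC0 : 0 ≤ C := le_trans (norm_nonneg _) (hCb 0 ⟨le_refl 0, hT⟩)
  have hcs : ∀ u ∈ Set.Icc (0:ℝ) T, 0 ≤ c * s u ∧ c * s u ≤ C := by
    intro u hu
    refine ⟨mul_nonneg hc (hsnn u), ?_⟩
    have := hCb u hu
    rw [Real.norm_eq_abs] at this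
    exact le_trans (le_abs_self _) this
  set L : ℝ := C * (βe + βi) + σ + φe + φi + 1 with hLdef
  -- Step 3: for every ε > 0, e + ε exp(L·) and i + ε exp(L·) are positive on [0,T]
  have key : ∀ ε : ℝ, 0 < ε → ∀ u ∈ Set.Icc (0:ℝ) T,
      0 < e u + ε * Real.exp (L * u) ∧ 0 < i u + ε * Real.exp (L * u) := by
    intro ε hε
    by_contra hcon
    push_neg at hcon
    obtain ⟨u₀, hu₀, hbad⟩ := hcon
    set f : ℝ → ℝ := fun u => e u + ε * Real.exp (L * u) with hfdef
    set g : ℝ → ℝ := fun u => i u + ε * Real.exp (L * u) with hgdef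
    have hfcont : Continuous f := hecont.add (continuous_const.mul (Real.continuous_exp.comp (continuous_const.mul continuous_id)))
    have hgcont : Continuous g := hicont.add (continuous_const.mul (Real.continuous_exp.comp (continuous_const.mul continuous_id)))
    set Z : Set ℝ := {u ∈ Set.Icc (0:ℝ) T | f u ≤ 0 ∨ g u ≤ 0} with hZdef
    have hZne : Z.Nonempty := by
      refine ⟨u₀, hu₀, ?_⟩
      rcases le_or_gt (f u₀) 0 with h | h
      · exact Or.inl h
      · exact Or.inr (by simpa [hgdef] using hbad h)
    have hZclosed : IsClosed Z := by
      apply IsClosed.inter isClosed_Icc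
      exact IsClosed.union (isClosed_le hfcont continuous_const)
        (isClosed_le hgcont continuous_const)
    have hZbdd : BddBelow Z := ⟨0, fun x hx => hx.1.1⟩
    set τ : ℝ := sInf Z with hτdef
    have hτZ : τ ∈ Z := IsClosed.csInf_mem hZclosed hZne hZbdd
    have hτIcc : τ ∈ Set.Icc (0:ℝ) T := hτZ.1
    have hpos_before : ∀ u, 0 ≤ u → u < τ → 0 < f u ∧ 0 < g u := by
      intro u hu0 huτ
      by_contra hcon2
      push_neg at hcon2
      have huZ : u ∈ Z := by
        refine ⟨⟨hu0, le_trans huτ.le hτIcc.2⟩, ?_⟩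
        rcases le_or_gt (f u) 0 with h | h
        · exact Or.inl h
        · exact Or.inr (hcon2 h)
      exact absurd (csInf_le hZbdd huZ) (not_le.mpr huτ)
    have hf0 : 0 < f 0 := by
      simp only [hfdef, mul_zero, Real.exp_zero, mul_one]
      linarith
    have hg0 : 0 < g 0 := by
      simp only [hgdef, mul_zero, Real.exp_zero, mul_one]
      linarith
    have hτpos : 0 < τ := by
      rcases lt_or_eq_of_le hτIcc.1 with h | h
      · exact h
      · exfalso
        rcases hτZ.2 with h2 | h2
        · rw [← h] at h2; linarith
        · rw [← h] at h2; linarith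
    have hevent : ∀ᶠ u in 𝓝[<] τ, 0 ≤ u ∧ u < τ := by
      filter_upwards [Ioo_mem_nhdsLT_of_mem (Set.mem_Ioc.mpr ⟨hτpos, le_refl τ⟩),
        self_mem_nhdsWithin] with u hu hu'
      exact ⟨hu.1.le, hu'⟩
    have hfτnn : 0 ≤ f τ := by
      have hlim : Filter.Tendsto f (𝓝[<] τ) (𝓝 (f τ)) :=
        (hfcont.tendsto τ).mono_left nhdsWithin_le_nhds
      refine ge_of_tendsto hlim ?_
      filter_upwards [hevent] with u hu
      exact (hpos_before u hu.1 hu.2).1.le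
    have hgτnn : 0 ≤ g τ := by
      have hlim : Filter.Tendsto g (𝓝[<] τ) (𝓝 (g τ)) :=
        (hgcont.tendsto τ).mono_left nhdsWithin_le_nhds
      refine ge_of_tendsto hlim ?_
      filter_upwards [hevent] with u hu
      exact (hpos_before u hu.1 hu.2).2.le
    set E : ℝ := ε * Real.exp (L * τ) with hEdef
    have hEpos : 0 < E := mul_pos hε (Real.exp_pos _)
    have hexpD : HasDerivAt (fun u => ε * Real.exp (L * u)) (ε * (Real.exp (L * τ) * L)) τ := by
      have h1 : HasDerivAt (fun u : ℝ => L * u) L τ := by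
        simpa using (hasDerivAt_id τ).const_mul L
      exact (h1.exp.const_mul ε)
    have hEL : ε * (Real.exp (L * τ) * L) = E * L := by rw [hEdef]; ring
    have hcsτ := hcs τ hτIcc
    rcases hτZ.2 with hcase | hcase
    · -- f τ = 0 case
      have hfτ : f τ = 0 := le_antisymm hcase hfτnn
      have heτ : e τ = -E := by
        have := hfτ; simp only [hfdef, ← hEdef] at this; linarith
      have hiτ : -E ≤ i τ := by
        have := hgτnn; simp only [hgdef, ← hEdef] at this; linarith
      have hfD : HasDerivAt f (c * s τ * (βe * e τ + βi * i τ) - (σ + φe) * e τ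
          + ε * (Real.exp (L * τ) * L)) τ := (he τ).add hexpD
      have hnonpos : c * s τ * (βe * e τ + βi * i τ) - (σ + φe) * e τ
          + ε * (Real.exp (L * τ) * L) ≤ 0 := by
        apply derivA hfD
        filter_upwards [hevent] with u hu
        rw [hfτ]
        exact (hpos_before u hu.1 hu.2).1.le
      have hb1 : -((βe + βi) * E) ≤ βe * e τ + βi * i τ := by
        rw [heτ]; nlinarith
      have hb2 : -(E * (C * (βe + βi))) ≤ c * s τ * (βe * e τ + βi * i τ) := by
        nlinarith [hcsτ.1, hcsτ.2, hb1, hEpos.le,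
          mul_nonneg (add_nonneg hβe hβi) hEpos.le]
      have h5 : (σ + φe) * e τ = -((σ + φe) * E) := by rw [heτ]; ring
      have hELs : E * L = E * (C * (βe + βi)) + E * (σ + φe + φi + 1) := by
        rw [hLdef]; ring
      have hp1 : 0 ≤ (σ + φe) * E := mul_nonneg (add_nonneg hσ hφe) hEpos.le
      have hp2 : 0 < E * (σ + φe + φi + 1) := mul_pos hEpos (by linarith)
      rw [hEL] at hnonpos
      rw [h5] at hnonpos
      linarith
    · -- g τ = 0 case
      have hgτ : g τ = 0 := le_antisymm hcase hgτnn
      have hiτ : i τ = -E := by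
        have := hgτ; simp only [hgdef, ← hEdef] at this; linarith
      have heτ : -E ≤ e τ := by
        have := hfτnn; simp only [hfdef, ← hEdef] at this; linarith
      have hgD : HasDerivAt g (σ * e τ - φi * i τ + ε * (Real.exp (L * τ) * L)) τ :=
        (hi τ).add hexpD
      have hnonpos : σ * e τ - φi * i τ + ε * (Real.exp (L * τ) * L) ≤ 0 := by
        apply derivA hgD
        filter_upwards [hevent] with u hu
        rw [hgτ]
        exact (hpos_before u hu.1 hu.2).2.le
      have h5 : φi * i τ = -(φi * E) := by rw [hiτ]; ring
      have h6 : -(σ * E) ≤ σ * e τ := by nlinarith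
      have hELs : E * L = E * σ + E * (C * (βe + βi) + φe + φi + 1) := by
        rw [hLdef]; ring
      have hp1 : 0 ≤ φi * E := mul_nonneg hφi hEpos.le
      have hp2 : 0 < E * (C * (βe + βi) + φe + φi + 1) := by
        have : 0 ≤ C * (βe + βi) := mul_nonneg hC0 (add_nonneg hβe hβi)
        exact mul_pos hEpos (by linarith)
      have hp3 : E * σ = σ * E := by ring
      rw [hEL] at hnonpos
      rw [h5] at hnonpos
      linarith
  -- Step 4: e, i nonneg on [0,T]
  have heinn : ∀ u ∈ Set.Icc (0:ℝ) T, 0 ≤ e u ∧ 0 ≤ i u := by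
    intro u hu
    constructor
    · by_contra h
      push_neg at h
      have hεpos : 0 < -e u / (2 * Real.exp (L * u)) := div_pos (by linarith) (by positivity)
      have hk := (key _ hεpos u hu).1
      have hεe : -e u / (2 * Real.exp (L * u)) * Real.exp (L * u) = -e u / 2 := by
        field_simp
      rw [hεe] at hk; linarith
    · by_contra h
      push_neg at h
      have hεpos : 0 < -i u / (2 * Real.exp (L * u)) := div_pos (by linarith) (by positivity)
      have hk := (key _ hεpos u hu).2
      have hεe : -i u / (2 * Real.exp (L * u)) * Real.exp (L * u) = -i u / 2 := by
        field_simp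
      rw [hεe] at hk; linarith
  -- Step 5: r monotone on [0,T]
  have hrc : ContinuousOn r (Set.Icc 0 T) :=
    (continuous_iff_continuousAt.mpr fun t => (hr t).continuousAt).continuousOn
  have hrd : ∀ x ∈ interior (Set.Icc (0:ℝ) T), DifferentiableAt ℝ r x :=
    fun x _ => (hr x).differentiableAt
  have hrd' : ∀ x ∈ interior (Set.Icc (0:ℝ) T), 0 ≤ deriv r x := by
    intro x hx
    rw [interior_Icc] at hx
    rw [(hr x).deriv]
    have h := heinn x ⟨hx.1.le, hx.2.le⟩
    have h1 : 0 ≤ φi * i x := mul_nonneg hφi h.2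
    have h2 : 0 ≤ φe * e x := mul_nonneg hφe h.1
    linarith
  have hrmono : MonotoneOn r (Set.Icc 0 T) :=
    monotoneOn_of_deriv_nonneg (convex_Icc 0 T) hrc
      (fun x hx => (hrd x hx).differentiableWithinAt) hrd'
  have hTIcc : T ∈ Set.Icc (0:ℝ) T := ⟨hT, le_refl T⟩
  have h0Icc : (0:ℝ) ∈ Set.Icc (0:ℝ) T := ⟨le_refl 0, hT⟩
  exact ⟨hsnn T, (heinn T hTIcc).1, (heinn T hTIcc).2,
    le_trans hr0 (hrmono h0Icc hTIcc hT)⟩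
end

section
/- Let f, g : [0,T] → ℝ be differentiable with f' = σ g - φ f, g' = -(σ + φₑ) g + h(t) with h(t) ≥ 0, σ, φ, φₑ ≥ 0, and f(0) = g(0) = 0. Then f(t) ≥ 0 and g(t) ≥ 0 for all t ∈ [0,T]. -/
lemma key_pos_prop (T : ℝ) (k : ℝ) (u u' : ℝ → ℝ) (hu0 : u 0 = 0)
    (hud : ∀ t ∈ Set.Icc 0 T, HasDerivAt u (u' t) t)
    (hpos : ∀ t ∈ Set.Icc 0 T, 0 ≤ u' t + k * u t) :
    ∀ t ∈ Set.Icc 0 T, 0 ≤ u t := by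
  intro t ht
  set G : ℝ → ℝ := fun s => Real.exp (k * s) * u s with hG
  have hGd : ∀ s ∈ Set.Icc 0 T, HasDerivAt G (Real.exp (k * s) * (u' s + k * u s)) s := by
    intro s hs
    have h1 : HasDerivAt (fun x => Real.exp (k * x)) (Real.exp (k * s) * k) s := by
      simpa [mul_comm] using ((hasDerivAt_id s).const_mul k).exp
    have : HasDerivAt (fun x => Real.exp (k * x) * u x) (Real.exp (k * s) * k * u s + Real.exp (k * s) * u' s) s := h1.mul (hud s hs)
    convert this using 1
    ring
  have hGc : ContinuousOn G (Set.Icc 0 T) := fun s hs =>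
    ((hGd s hs).continuousAt).continuousWithinAt
  have hmono : MonotoneOn G (Set.Icc 0 T) := by
    apply monotoneOn_of_deriv_nonneg (convex_Icc 0 T) hGc
    · intro x hx
      rw [interior_Icc] at hx
      exact ((hGd x (Set.mem_Icc_of_Ioo hx)).differentiableAt).differentiableWithinAt
    · intro x hx
      rw [interior_Icc] at hx
      have hx' := Set.mem_Icc_of_Ioo hx
      rw [(hGd x hx').deriv]
      exact mul_nonneg (Real.exp_pos _).le (hpos x hx')
  have hT : (0:ℝ) ≤ T := ht.1.trans ht.2
  have h0 : G 0 = 0 := by simp [hG, hu0]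
  have := hmono (Set.left_mem_Icc.2 hT) ht ht.1
  rw [h0] at this
  have hexp := Real.exp_pos (k * t)
  simp only [hG] at this
  nlinarith [this]

theorem positivity_propagation
    (T : ℝ) (hT : 0 ≤ T) (f g h : ℝ → ℝ) (σ φ φe : ℝ)
    (hσ : 0 ≤ σ) (hφ : 0 ≤ φ) (hφe : 0 ≤ φe)
    (hf : ∀ t ∈ Set.Icc 0 T, HasDerivAt f (σ * g t - φ * f t) t)
    (hg : ∀ t ∈ Set.Icc 0 T, HasDerivAt g (-(σ + φe) * g t + h t) t)
    (hh : ∀ t ∈ Set.Icc 0 T, 0 ≤ h t)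
    (hf0 : f 0 = 0) (hg0 : g 0 = 0) :
    ∀ t ∈ Set.Icc 0 T, 0 ≤ f t ∧ 0 ≤ g t := by
  have hgpos : ∀ t ∈ Set.Icc 0 T, 0 ≤ g t := by
    apply key_pos_prop T (σ + φe) g (fun t => -(σ + φe) * g t + h t) hg0 hg
    intro t ht
    have := hh t ht
    nlinarith
  have hfpos : ∀ t ∈ Set.Icc 0 T, 0 ≤ f t := by
    apply key_pos_prop T φ f (fun t => σ * g t - φ * f t) hf0 hf
    intro t ht
    have := hgpos t ht
    nlinarith
  exact fun t ht => ⟨hfpos t ht, hgpos t ht⟩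
end
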